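/- Let p₀, p₁, p : [0, T_E] → [0,1], let t₁, …, t_K ∈ [0, T_E], and set h_k = 1 if p₁(t_k) ≥ p₀(t_k) and h_k = −1 otherwise. Let r > 0 and m > 0 and assume: (i) Σ_{k=1}^K |p₁(t_k) − p₀(t_k)| > rK; (ii) sup_{0 ≤ t ≤ T_E} |p(t) − p₁(t)| ≤ r/4; (iii) 2m√K ≤ rK/4. Let e₁, …, e_K be independent random variables with e_k ∈ {0,1} and E[e_k] = p(t_k). Then Pr( Σ_{k=1}^K h_k·(e_k − p₀(t_k)) ≤ 2m·√K ) ≤ exp(−r²K/8). -/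

import Mathlib

open MeasureTheory ProbabilityTheory

lemma exp_le_quad {x : ℝ} (hx : |x| ≤ 1) : Real.exp x ≤ 1 + x + 3/4 * x^2 := by
  have h := Real.exp_bound hx (n := 2) (by norm_num)
  have h2 : ∑ m ∈ Finset.range 2, x ^ m / m.factorial = 1 + x := by
    simp [Finset.sum_range_succ]
  rw [h2] at h
  have h3 : |x| ^ 2 * (((2:ℕ).succ : ℝ) / (((2:ℕ).factorial : ℝ) * (2:ℕ))) = 3/4 * x^2 := by
    rw [sq_abs]; norm_num [Nat.factorial]; ring
  rw [h3] at h
  linarith [(abs_le.mp h).2]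

lemma mgf_bernoulli_le {Ω : Type*} [MeasurableSpace Ω] (μ : Measure Ω) [IsProbabilityMeasure μ]
    (e : Ω → ℝ) (he : Measurable e) (hval : ∀ ω, e ω = 0 ∨ e ω = 1)
    (q c r : ℝ) (hq : ∫ ω, e ω ∂μ = q) (hc : c = 1 ∨ c = -1) (hr0 : 0 ≤ r) (hr1 : r ≤ 1) :
    mgf (fun ω => c * (q - e ω)) μ r ≤ Real.exp (3 * r^2 / 16) := by
  have heint : Integrable e μ := by
    refine Integrable.mono' (integrable_const 1) he.aestronglyMeasurable ?_
    filter_upwards with ω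
    rcases hval ω with h0 | h0 <;> simp [h0]
  have hq0 : 0 ≤ q := by
    rw [← hq]
    refine integral_nonneg fun ω => ?_
    rcases hval ω with h0 | h0 <;> simp [h0]
  have hq1 : q ≤ 1 := by
    rw [← hq]
    calc ∫ ω, e ω ∂μ ≤ ∫ _ω, (1:ℝ) ∂μ := by
          refine integral_mono heint (integrable_const 1) fun ω => ?_
          rcases hval ω with h0 | h0 <;> simp [h0]
      _ = 1 := by simp
  have hcabs : |c| = 1 := by rcases hc with h | h <;> simp [h]
  set A : ℝ := 1 + r*c*q + (3/4)*r^2*q^2 with hA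
  set B : ℝ := -(r*c) + (3/4)*r^2*(1 - 2*q) with hB
  have habs : ∀ ω, |r * (c * (q - e ω))| ≤ 1 := by
    intro ω
    rw [abs_mul, abs_mul, hcabs, one_mul]
    have h1 : |q - e ω| ≤ 1 := by
      rw [abs_le]; rcases hval ω with h0 | h0 <;> rw [h0] <;> constructor <;> linarith
    calc |r| * |q - e ω| ≤ 1 * 1 := by
          apply mul_le_mul _ h1 (abs_nonneg _) zero_le_one
          rwa [abs_of_nonneg hr0]
      _ = 1 := by norm_num
  have hpt : ∀ ω, Real.exp (r * (c * (q - e ω))) ≤ A + B * e ω := by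
    intro ω
    refine (exp_le_quad (habs ω)).trans_eq ?_
    have he2 : e ω * e ω = e ω := by rcases hval ω with h0 | h0 <;> simp [h0]
    have hc2 : c * c = 1 := by rcases hc with h | h <;> norm_num [h]
    have hx2 : (r * (c * (q - e ω)))^2 = r^2 * (q^2 - 2*q*(e ω) + e ω) := by
      have hh : (r * (c * (q - e ω)))^2 = r^2 * (c*c) * (q^2 - 2*q*(e ω) + e ω * e ω) := by ring
      rw [hh, hc2, he2]; ring
    rw [hA, hB, hx2]; ring
  have hint2 : Integrable (fun ω => A + B * e ω) μ :=
    (integrable_const A).add (heint.const_mul B)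
  have hintexp : Integrable (fun ω => Real.exp (r * (c * (q - e ω)))) μ := by
    refine Integrable.mono' (integrable_const (Real.exp 1)) ?_ ?_
    · exact (Real.measurable_exp.comp
        (((measurable_const.sub he).const_mul c).const_mul r)).aestronglyMeasurable
    · filter_upwards with ω
      rw [Real.norm_eq_abs, Real.abs_exp, Real.exp_le_exp]
      exact (le_abs_self _).trans (habs ω)
  have hmain : mgf (fun ω => c * (q - e ω)) μ r ≤ A + B * q := by
    rw [mgf]
    calc ∫ ω, Real.exp (r * (c * (q - e ω))) ∂μ ≤ ∫ ω, (A + B * e ω) ∂μ :=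
          integral_mono hintexp hint2 hpt
      _ = A + B * q := by
          rw [integral_add (integrable_const A) (heint.const_mul B), integral_const,
            integral_const_mul, hq]; simp
  refine hmain.trans ?_
  have hABq : A + B * q = 1 + (3/4)*r^2*(q*(1-q)) := by rw [hA, hB]; ring
  rw [hABq]
  have hqq : q * (1-q) ≤ 1/4 := by nlinarith [sq_nonneg (q - 1/2)]
  have h5 : 1 + (3/4)*r^2*(q*(1-q)) ≤ 1 + 3*r^2/16 := by nlinarith [sq_nonneg r]
  refine h5.trans ?_
  linarith [Real.add_one_le_exp (3*r^2/16)]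

/-- Type-II error bound for the consistency tests: if `Σ_k |p₁(t_k) − p₀(t_k)| > rK`,
`sup_{[0,T_E]} |p − p₁| ≤ r/4`, and `2m√K ≤ rK/4`, then for independent Bernoulli
variables `e_k` with means `p(t_k)` and signs `h_k = sign(p₁(t_k) − p₀(t_k))`,
`Pr(Σ h_k (e_k − p₀(t_k)) ≤ 2m√K) ≤ exp(−r²K/8)`. -/
theorem stmt9 {Ω : Type*} [MeasurableSpace Ω] (μ : Measure Ω) [IsProbabilityMeasure μ]
    (T_E : ℝ) (hT : 0 < T_E) (p₀ p₁ p : ℝ → ℝ)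
    (hp₀ : ∀ t ∈ Set.Icc 0 T_E, p₀ t ∈ Set.Icc (0:ℝ) 1)
    (hp₁ : ∀ t ∈ Set.Icc 0 T_E, p₁ t ∈ Set.Icc (0:ℝ) 1)
    (hp : ∀ t ∈ Set.Icc 0 T_E, p t ∈ Set.Icc (0:ℝ) 1)
    (K : ℕ) (hK : 0 < K) (t : Fin K → ℝ) (ht : ∀ k, t k ∈ Set.Icc 0 T_E)
    (h : Fin K → ℝ) (hdef : ∀ k, h k = if p₀ (t k) ≤ p₁ (t k) then (1:ℝ) else -1)
    (r m : ℝ) (hr : 0 < r) (hm : 0 < m)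
    (hsep : ∑ k, |p₁ (t k) - p₀ (t k)| > r * K)
    (hclose : ∀ s ∈ Set.Icc 0 T_E, |p s - p₁ s| ≤ r / 4)
    (hmK : 2 * m * Real.sqrt K ≤ r * K / 4)
    (e : Fin K → Ω → ℝ) (he : ∀ k, Measurable (e k))
    (hval : ∀ k ω, e k ω = 0 ∨ e k ω = 1)
    (hindep : iIndepFun e μ)
    (hmean : ∀ k, ∫ ω, e k ω ∂μ = p (t k)) :
    μ {ω | ∑ k, h k * (e k ω - p₀ (t k)) ≤ 2 * m * Real.sqrt K}
      ≤ ENNReal.ofReal (Real.exp (-(r ^ 2) * K / 8)) := by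
  have hKpos : (0:ℝ) < K := Nat.cast_pos.mpr hK
  have hhk : ∀ k, h k = 1 ∨ h k = -1 := by
    intro k; rw [hdef k]; split <;> simp
  -- r < 1
  have hsum_le : ∑ k, |p₁ (t k) - p₀ (t k)| ≤ K := by
    calc ∑ k, |p₁ (t k) - p₀ (t k)| ≤ ∑ _k : Fin K, (1:ℝ) := by
          refine Finset.sum_le_sum fun k _ => ?_
          have h1 := hp₁ (t k) (ht k); have h0 := hp₀ (t k) (ht k)
          rw [abs_le]; constructor <;> [linarith [h1.1, h0.2]; linarith [h1.2, h0.1]]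
      _ = K := by simp
  have hr1 : r ≤ 1 := by
    by_contra hcon
    push_neg at hcon
    nlinarith
  set Z : Fin K → Ω → ℝ := fun k ω => h k * (p (t k) - e k ω) with hZ
  have hZmeas : ∀ k, Measurable (Z k) := fun k => (measurable_const.sub (he k)).const_mul _
  have hZindep : iIndepFun Z μ :=
    hindep.comp (fun k x => h k * (p (t k) - x))
      (fun k => (measurable_const.sub measurable_id).const_mul _)
  have hZle : ∀ k ω, |Z k ω| ≤ 1 := by
    intro k ω
    have hq := hp (t k) (ht k)
    have habs : |h k| = 1 := by rcases hhk k with hk | hk <;> simp [hk]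
    rw [hZ]
    simp only []
    rw [abs_mul, habs, one_mul, abs_le]
    rcases hval k ω with h0 | h0 <;> rw [h0] <;> constructor <;>
      first
        | linarith [hq.1, hq.2]
  -- lower bound on the mean part
  have hlow : ∑ k, h k * (p (t k) - p₀ (t k)) ≥ (∑ k, |p₁ (t k) - p₀ (t k)|) - K * (r/4) := by
    have h1 : ∀ k, |p₁ (t k) - p₀ (t k)| - r/4 ≤ h k * (p (t k) - p₀ (t k)) := by
      intro k
      have hcl := abs_le.mp (hclose (t k) (ht k))
      have habs : h k * (p₁ (t k) - p₀ (t k)) = |p₁ (t k) - p₀ (t k)| := by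
        rw [hdef k]; split_ifs with hc
        · rw [one_mul, abs_of_nonneg (by linarith)]
        · push_neg at hc
          rw [abs_of_neg (by linarith)]; ring
      have h2 : -(r/4) ≤ h k * (p (t k) - p₁ (t k)) := by
        rcases hhk k with hk | hk <;> rw [hk] <;> [linarith [hcl.1]; nlinarith [hcl.2]]
      calc |p₁ (t k) - p₀ (t k)| - r/4
          ≤ h k * (p₁ (t k) - p₀ (t k)) + h k * (p (t k) - p₁ (t k)) := by rw [habs]; linarith
        _ = h k * (p (t k) - p₀ (t k)) := by ring
    calc ∑ k, h k * (p (t k) - p₀ (t k)) ≥ ∑ k, (|p₁ (t k) - p₀ (t k)| - r/4) :=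
          Finset.sum_le_sum fun k _ => h1 k
      _ = (∑ k, |p₁ (t k) - p₀ (t k)|) - K * (r/4) := by
          rw [Finset.sum_sub_distrib]
          simp [mul_comm]
  -- event inclusion
  have hsub : {ω | ∑ k, h k * (e k ω - p₀ (t k)) ≤ 2 * m * Real.sqrt K}
      ⊆ {ω | r*K/2 ≤ (∑ k, Z k) ω} := by
    intro ω hω
    simp only [Set.mem_setOf_eq] at hω ⊢
    rw [Finset.sum_apply]
    have hid : ∑ k, Z k ω
        = (∑ k, h k * (p (t k) - p₀ (t k))) - ∑ k, h k * (e k ω - p₀ (t k)) := by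
      rw [← Finset.sum_sub_distrib]
      exact Finset.sum_congr rfl fun k _ => by rw [hZ]; ring
    rw [hid]
    linarith
  -- integrability of exp (r * W)
  have hWmeas : Measurable (∑ k, Z k) := by
    have := Finset.measurable_sum (f := Z) Finset.univ (fun k _ => hZmeas k)
    convert this using 1
    ext ω; rw [Finset.sum_apply]
  have hWint : Integrable (fun ω => Real.exp (r * (∑ k, Z k) ω)) μ := by
    refine Integrable.mono' (integrable_const (Real.exp (r * K))) ?_ ?_
    · exact (Real.measurable_exp.comp (hWmeas.const_mul r)).aestronglyMeasurable
    · filter_upwards with ω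
      rw [Real.norm_eq_abs, Real.abs_exp, Real.exp_le_exp]
      have hWle : (∑ k, Z k) ω ≤ K := by
        rw [Finset.sum_apply]
        calc ∑ k, Z k ω ≤ ∑ _k : Fin K, (1:ℝ) :=
              Finset.sum_le_sum fun k _ => (abs_le.mp (hZle k ω)).2
          _ = K := by simp
      exact mul_le_mul_of_nonneg_left hWle hr.le
  -- Chernoff
  have hcher := measure_ge_le_exp_mul_mgf (μ := μ) (X := ∑ k, Z k) (t := r) (r*K/2) hr.le hWint
  have hmgf : mgf (∑ k, Z k) μ r = ∏ k, mgf (Z k) μ r := hZindep.mgf_sum hZmeas Finset.univ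
  have hprod : ∏ k, mgf (Z k) μ r ≤ Real.exp (3 * r^2 / 16) ^ K := by
    calc ∏ k, mgf (Z k) μ r ≤ ∏ _k : Fin K, Real.exp (3 * r^2 / 16) := by
          refine Finset.prod_le_prod (fun k _ => mgf_nonneg) fun k _ => ?_
          exact mgf_bernoulli_le μ (e k) (he k) (hval k) (p (t k)) (h k) r (hmean k)
            (hhk k) hr.le hr1
      _ = Real.exp (3 * r^2 / 16) ^ K := by simp
  have hfinal : Real.exp (-r * (r*K/2)) * mgf (∑ k, Z k) μ r
      ≤ Real.exp (-(r ^ 2) * K / 8) := by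
    calc Real.exp (-r * (r*K/2)) * mgf (∑ k, Z k) μ r
        ≤ Real.exp (-r * (r*K/2)) * Real.exp (3 * r^2 / 16) ^ K := by
          rw [hmgf]
          exact mul_le_mul_of_nonneg_left hprod (Real.exp_pos _).le
      _ = Real.exp (-r * (r*K/2) + K * (3 * r^2 / 16)) := by
          rw [← Real.exp_nat_mul, ← Real.exp_add]
      _ ≤ Real.exp (-(r ^ 2) * K / 8) := by
          rw [Real.exp_le_exp]
          nlinarith [mul_nonneg (sq_nonneg r) hKpos.le]
  calc μ {ω | ∑ k, h k * (e k ω - p₀ (t k)) ≤ 2 * m * Real.sqrt K}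
      ≤ μ {ω | r*K/2 ≤ (∑ k, Z k) ω} := measure_mono hsub
    _ = ENNReal.ofReal (μ {ω | r*K/2 ≤ (∑ k, Z k) ω}).toReal :=
        (ENNReal.ofReal_toReal (measure_ne_top μ _)).symm
    _ ≤ ENNReal.ofReal (Real.exp (-(r ^ 2) * K / 8)) :=
        ENNReal.ofReal_le_ofReal (hcher.trans hfinal)
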